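/- Let γ ⊂ ℝ^d be locally finite and satisfy the density condition with constant a > 0 for interaction radius r > 0. Then for every α > 0 the family (n_{x,r}(γ)² e^{−α|x|})_{x ∈ γ} is summable, i.e. ∑_{x∈γ} n_{x,r}(γ)² e^{−α|x|} < ∞. -/

import Mathlib

open scoped BigOperators

noncomputable section

/-- The finite set `γ_{x,r} = {y ∈ γ : |x - y| < r}` of points of `γ` within
distance `r` of `x`, given local finiteness of `γ`. -/
def nbhd {d : ℕ} (γ : Set (EuclideanSpace ℝ (Fin d)))
    (hLF : ∀ (x : EuclideanSpace ℝ (Fin d)) (R : ℝ), {y ∈ γ | dist x y < R}.Finite)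
    (r : ℝ) (x : EuclideanSpace ℝ (Fin d)) : Finset (EuclideanSpace ℝ (Fin d)) :=
  (hLF x r).toFinset

/-- `n_{x,r}(γ)`, the number of points of `γ` within distance `r` of `x`. -/
def npts {d : ℕ} (γ : Set (EuclideanSpace ℝ (Fin d)))
    (hLF : ∀ (x : EuclideanSpace ℝ (Fin d)) (R : ℝ), {y ∈ γ | dist x y < R}.Finite)
    (r : ℝ) (x : EuclideanSpace ℝ (Fin d)) : ℕ :=
  (nbhd γ hLF r x).card

/-- `V̄_x(q) = ∑_{y ∈ γ_{x,r}} V_{xy}(q_x, q_y)`. -/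
def Vbar {d : ℕ} (γ : Set (EuclideanSpace ℝ (Fin d)))
    (hLF : ∀ (x : EuclideanSpace ℝ (Fin d)) (R : ℝ), {y ∈ γ | dist x y < R}.Finite)
    (V : EuclideanSpace ℝ (Fin d) → EuclideanSpace ℝ (Fin d) → ℝ → ℝ → ℝ)
    (r : ℝ) (q : EuclideanSpace ℝ (Fin d) → ℝ) (x : EuclideanSpace ℝ (Fin d)) : ℝ :=
  ∑ y ∈ nbhd γ hLF r x, V x y (q x) (q y)

open MeasureTheory Metric Set ENNReal

lemma aux_summable (k : ℕ) {α : ℝ} (hα : 0 < α) :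
    Summable (fun n : ℕ => ((n : ℝ) + 1) ^ k * Real.exp (-α * n)) := by
  have hρ : ‖Real.exp (-α)‖ < 1 := by
    rw [Real.norm_eq_abs, abs_of_pos (Real.exp_pos _)]
    exact Real.exp_lt_one_iff.mpr (by linarith)
  have h := summable_pow_mul_geometric_of_norm_lt_one (R := ℝ) k hρ
  have h2 : Summable (fun n : ℕ => ((n + 1 : ℕ) : ℝ) ^ k * Real.exp (-α) ^ (n + 1)) :=
    h.comp_injective (add_left_injective 1)
  have h3 := h2.mul_left (Real.exp (-α))⁻¹
  refine h3.congr fun n => ?_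
  have hx : Real.exp (-α * n) = Real.exp (-α) ^ n := by
    rw [← Real.exp_nat_mul]; ring_nf
  rw [hx]
  have he : Real.exp (-α) ≠ 0 := (Real.exp_pos _).ne'
  push_cast
  field_simp
  ring

lemma count_ennreal {d : ℕ} (γ : Set (EuclideanSpace ℝ (Fin d)))
    (hLF : ∀ (x : EuclideanSpace ℝ (Fin d)) (R : ℝ), {y ∈ γ | dist x y < R}.Finite)
    (r a : ℝ) (hr : 0 < r) (ha : 0 < a)
    (hden : ∀ x : EuclideanSpace ℝ (Fin d),
      (npts γ hLF r x : ℝ) ≤ a * Real.sqrt (1 + ‖x‖))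
    (R : ℝ) (hR : 0 < R) :
    ((hLF 0 R).toFinset.card : ℝ≥0∞) * volume (ball (0 : EuclideanSpace ℝ (Fin d)) r)
      ≤ ENNReal.ofReal (a * Real.sqrt (1 + (R + r)))
        * volume (ball (0 : EuclideanSpace ℝ (Fin d)) (R + r)) := by
  classical
  set S : Finset (EuclideanSpace ℝ (Fin d)) := (hLF 0 R).toFinset with hS
  have key : ∀ z : EuclideanSpace ℝ (Fin d),
      (∑ x ∈ S, (ball x r).indicator (1 : EuclideanSpace ℝ (Fin d) → ℝ≥0∞) z)
      ≤ (ball (0 : EuclideanSpace ℝ (Fin d)) (R + r)).indicator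
          (fun _ => ENNReal.ofReal (a * Real.sqrt (1 + (R + r)))) z := by
    intro z
    by_cases hz : z ∈ ball (0 : EuclideanSpace ℝ (Fin d)) (R + r)
    · rw [Set.indicator_of_mem hz]
      have hsum : (∑ x ∈ S, (ball x r).indicator (1 : EuclideanSpace ℝ (Fin d) → ℝ≥0∞) z)
          = ((S.filter fun x => z ∈ ball x r).card : ℝ≥0∞) := by
        rw [Finset.card_filter]
        push_cast
        refine Finset.sum_congr rfl fun x _ => ?_
        by_cases hx : z ∈ ball x r <;> simp [Set.indicator_apply, hx]
      rw [hsum]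
      have hsub : (S.filter fun x => z ∈ ball x r) ⊆ nbhd γ hLF r z := by
        intro x hx
        rw [Finset.mem_filter] at hx
        obtain ⟨hxS, hxz⟩ := hx
        rw [hS, Set.Finite.mem_toFinset] at hxS
        rw [nbhd, Set.Finite.mem_toFinset]
        exact ⟨hxS.1, mem_ball.mp hxz⟩
      have hcard : (S.filter fun x => z ∈ ball x r).card ≤ npts γ hLF r z :=
        Finset.card_le_card hsub
      have h1 : ((S.filter fun x => z ∈ ball x r).card : ℝ)
          ≤ a * Real.sqrt (1 + (R + r)) := by
        refine le_trans (le_trans (Nat.cast_le.mpr hcard) (hden z)) ?_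
        have hz' : ‖z‖ < R + r := by
          rw [mem_ball, dist_zero_right] at hz; exact hz
        have hmono := Real.sqrt_le_sqrt (by linarith : (1 : ℝ) + ‖z‖ ≤ 1 + (R + r))
        nlinarith [Real.sqrt_nonneg (1 + ‖z‖)]
      calc ((S.filter fun x => z ∈ ball x r).card : ℝ≥0∞)
          = ENNReal.ofReal ((S.filter fun x => z ∈ ball x r).card : ℝ) := by
            rw [ENNReal.ofReal_natCast]
        _ ≤ ENNReal.ofReal (a * Real.sqrt (1 + (R + r))) := ENNReal.ofReal_le_ofReal h1
    · have hzero : ∀ x ∈ S, (ball x r).indicator (1 : EuclideanSpace ℝ (Fin d) → ℝ≥0∞) z = 0 := by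
        intro x hxS
        rw [hS, Set.Finite.mem_toFinset] at hxS
        refine Set.indicator_of_notMem (fun hmem => hz ?_) _
        have h1 : dist z x < r := mem_ball.mp hmem
        have h2 : dist x 0 < R := by rw [dist_comm]; exact hxS.2
        rw [mem_ball]
        calc dist z 0 ≤ dist z x + dist x 0 := dist_triangle _ _ _
          _ < R + r := by linarith
      rw [Finset.sum_eq_zero hzero]
      exact zero_le
  calc ((S.card : ℝ≥0∞)) * volume (ball (0 : EuclideanSpace ℝ (Fin d)) r)
      = ∑ x ∈ S, volume (ball x r) := by
        rw [Finset.sum_congr rfl fun x _ => Measure.addHaar_ball_center volume x r,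
          Finset.sum_const, nsmul_eq_mul]
    _ = ∑ x ∈ S, ∫⁻ z, (ball x r).indicator (1 : EuclideanSpace ℝ (Fin d) → ℝ≥0∞) z := by
        refine Finset.sum_congr rfl fun x _ => ?_
        rw [lintegral_indicator_one measurableSet_ball]
    _ = ∫⁻ z, ∑ x ∈ S, (ball x r).indicator (1 : EuclideanSpace ℝ (Fin d) → ℝ≥0∞) z := by
        rw [lintegral_finset_sum _ fun x _ => measurable_one.indicator measurableSet_ball]
    _ ≤ ∫⁻ z, (ball (0 : EuclideanSpace ℝ (Fin d)) (R + r)).indicator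
          (fun _ => ENNReal.ofReal (a * Real.sqrt (1 + (R + r)))) z :=
        lintegral_mono key
    _ = ENNReal.ofReal (a * Real.sqrt (1 + (R + r)))
        * volume (ball (0 : EuclideanSpace ℝ (Fin d)) (R + r)) := by
        rw [lintegral_indicator_const measurableSet_ball]

theorem statement4 {d : ℕ} (hd : 1 ≤ d) (γ : Set (EuclideanSpace ℝ (Fin d)))
    (hcount : γ.Countable)
    (hLF : ∀ (x : EuclideanSpace ℝ (Fin d)) (R : ℝ), {y ∈ γ | dist x y < R}.Finite)
    (r a : ℝ) (hr : 0 < r) (ha : 0 < a)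
    (hden : ∀ x : EuclideanSpace ℝ (Fin d),
      (npts γ hLF r x : ℝ) ≤ a * Real.sqrt (1 + ‖x‖))
    (α : ℝ) (hα : 0 < α) :
    Summable (fun x : γ =>
      ((npts γ hLF r x : ℝ)) ^ 2 * Real.exp (-α * ‖(x : EuclideanSpace ℝ (Fin d))‖)) := by
  classical
  set c1 : ℝ := (volume (ball (0 : EuclideanSpace ℝ (Fin d)) 1)).toReal with hc1
  set v : ℝ := (volume (ball (0 : EuclideanSpace ℝ (Fin d)) r)).toReal with hv
  have hvpos : 0 < v := by
    rw [hv]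
    exact ENNReal.toReal_pos (measure_ball_pos volume 0 hr).ne' (measure_ball_lt_top).ne
  have hc1nonneg : 0 ≤ c1 := ENNReal.toReal_nonneg
  have count_real : ∀ R : ℝ, 0 < R →
      ((hLF 0 R).toFinset.card : ℝ)
        ≤ a * Real.sqrt (1 + (R + r)) * ((R + r) ^ d * c1) / v := by
    intro R hR
    have h := count_ennreal γ hLF r a hr ha hden R hR
    have hvol : volume (ball (0 : EuclideanSpace ℝ (Fin d)) (R + r))
        = ENNReal.ofReal ((R + r) ^ d)
          * volume (ball (0 : EuclideanSpace ℝ (Fin d)) 1) := by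
      rw [Measure.addHaar_ball_of_pos volume 0 (by linarith : (0:ℝ) < R + r)]
      congr 2
      simp [finrank_euclideanSpace_fin]
    have hfin : volume (ball (0 : EuclideanSpace ℝ (Fin d)) (R + r)) ≠ ⊤ :=
      measure_ball_lt_top.ne
    have htr := ENNReal.toReal_mono
      (ENNReal.mul_ne_top ENNReal.ofReal_ne_top hfin) h
    rw [ENNReal.toReal_mul, ENNReal.toReal_mul, ENNReal.toReal_natCast,
      ENNReal.toReal_ofReal (by positivity)] at htr
    rw [hvol, ENNReal.toReal_mul, ENNReal.toReal_ofReal (by positivity)] at htr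
    rw [le_div_iff₀ hvpos, hv, hc1]
    linarith [htr]
  set g := (fun n : ℕ =>
    (a * Real.sqrt (1 + (((n : ℝ) + 1) + r)) * ((((n : ℝ) + 1) + r) ^ d * c1) / v)
      * (a ^ 2 * ((n : ℝ) + 2) * Real.exp (-α * n))) with hg
  have hgnonneg : ∀ n, 0 ≤ g n := by
    intro n
    rw [hg]
    have h0 : (0:ℝ) ≤ Real.sqrt (1 + (((n : ℝ) + 1) + r)) := Real.sqrt_nonneg _
    positivity
  have hgsummable : Summable g := by
    set K := (a:ℝ) ^ 3 * (2 + r) ^ (d + 2) * c1 / v with hK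
    have hbase := (aux_summable (d + 2) hα).mul_left K
    refine Summable.of_nonneg_of_le hgnonneg (fun n => ?_) hbase
    have hfac : ((n : ℝ) + 1) + r ≤ (2 + r) * ((n : ℝ) + 1) := by
      nlinarith [Nat.cast_nonneg (α := ℝ) n]
    have hfac2 : (n : ℝ) + 2 ≤ (2 + r) * ((n : ℝ) + 1) := by
      nlinarith [Nat.cast_nonneg (α := ℝ) n]
    have hsqrt : Real.sqrt (1 + (((n : ℝ) + 1) + r)) ≤ (2 + r) * ((n : ℝ) + 1) := by
      have h2 : Real.sqrt (1 + (((n : ℝ) + 1) + r)) ≤ 1 + (((n : ℝ) + 1) + r) := by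
        nlinarith [Real.sq_sqrt (by positivity : (0:ℝ) ≤ 1 + (((n : ℝ) + 1) + r)),
          Real.sqrt_nonneg (1 + (((n : ℝ) + 1) + r))]
      nlinarith [Nat.cast_nonneg (α := ℝ) n]
    have hexp : (0:ℝ) < Real.exp (-α * n) := Real.exp_pos _
    have hpow : (((n : ℝ) + 1) + r) ^ d ≤ ((2 + r) * ((n : ℝ) + 1)) ^ d :=
      pow_le_pow_left₀ (by positivity) hfac d
    have hB : a ^ 2 * ((n : ℝ) + 2) * Real.exp (-α * n)
        ≤ a ^ 2 * ((2 + r) * ((n : ℝ) + 1)) * Real.exp (-α * n) := by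
      refine mul_le_mul_of_nonneg_right ?_ hexp.le
      exact mul_le_mul_of_nonneg_left hfac2 (by positivity)
    have hA : a * Real.sqrt (1 + (((n : ℝ) + 1) + r)) * ((((n : ℝ) + 1) + r) ^ d * c1) / v
        ≤ a * ((2 + r) * ((n : ℝ) + 1)) * (((2 + r) * ((n : ℝ) + 1)) ^ d * c1) / v := by
      rw [div_eq_mul_inv, div_eq_mul_inv]
      refine mul_le_mul_of_nonneg_right ?_ (by positivity)
      refine mul_le_mul ?_ ?_ (by positivity) (by positivity)
      · exact mul_le_mul_of_nonneg_left hsqrt ha.le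
      · exact mul_le_mul_of_nonneg_right hpow hc1nonneg
    have hgle : g n ≤ (a * ((2 + r) * ((n : ℝ) + 1)) * (((2 + r) * ((n : ℝ) + 1)) ^ d * c1) / v)
        * (a ^ 2 * ((2 + r) * ((n : ℝ) + 1)) * Real.exp (-α * n)) := by
      rw [hg]
      refine mul_le_mul hA hB (by positivity) (by positivity)
    refine hgle.trans (le_of_eq ?_)
    rw [hK, mul_pow]
    field_simp
    ring
  apply summable_of_sum_le (c := ∑' n, g n)
  · intro x; positivity
  · intro u
    set φ := fun x : γ => ⌊‖(x : EuclideanSpace ℝ (Fin d))‖⌋₊ with hφ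
    set f := (fun x : γ =>
      ((npts γ hLF r x : ℝ)) ^ 2 * Real.exp (-α * ‖(x : EuclideanSpace ℝ (Fin d))‖)) with hf
    have hdecomp : ∑ x ∈ u, f x = ∑ n ∈ u.image φ, ∑ x ∈ u.filter (fun x => φ x = n), f x :=
      (Finset.sum_fiberwise_of_maps_to (fun x hx => Finset.mem_image_of_mem φ hx) f).symm
    rw [hdecomp]
    have hinner : ∀ n ∈ u.image φ, ∑ x ∈ u.filter (fun x => φ x = n), f x ≤ g n := by
      intro n _
      set b := (a:ℝ) ^ 2 * ((n : ℝ) + 2) * Real.exp (-α * n) with hb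
      have hbnonneg : 0 ≤ b := by rw [hb]; positivity
      have hfle : ∀ x ∈ u.filter (fun x => φ x = n), f x ≤ b := by
        intro x hx
        rw [Finset.mem_filter] at hx
        have hfl : ⌊‖(x : EuclideanSpace ℝ (Fin d))‖⌋₊ = n := hx.2
        have hlow : (n : ℝ) ≤ ‖(x : EuclideanSpace ℝ (Fin d))‖ := by
          rw [← hfl]; exact Nat.floor_le (norm_nonneg _)
        have hup : ‖(x : EuclideanSpace ℝ (Fin d))‖ < (n : ℝ) + 1 := by
          rw [← hfl]; exact Nat.lt_floor_add_one _
        have h1 : ((npts γ hLF r x : ℝ)) ^ 2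
            ≤ a ^ 2 * (1 + ‖(x : EuclideanSpace ℝ (Fin d))‖) := by
          have hd1 := hden (x : EuclideanSpace ℝ (Fin d))
          nlinarith [Nat.cast_nonneg (α := ℝ) (npts γ hLF r (x : EuclideanSpace ℝ (Fin d))),
            Real.sq_sqrt (by positivity : (0:ℝ) ≤ 1 + ‖(x : EuclideanSpace ℝ (Fin d))‖),
            Real.sqrt_nonneg (1 + ‖(x : EuclideanSpace ℝ (Fin d))‖)]
        have h2 : Real.exp (-α * ‖(x : EuclideanSpace ℝ (Fin d))‖) ≤ Real.exp (-α * n) := by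
          apply Real.exp_le_exp.mpr
          nlinarith
        have h3 : (0:ℝ) < Real.exp (-α * ‖(x : EuclideanSpace ℝ (Fin d))‖) := Real.exp_pos _
        rw [hf, hb]
        calc ((npts γ hLF r x : ℝ)) ^ 2 * Real.exp (-α * ‖(x : EuclideanSpace ℝ (Fin d))‖)
            ≤ (a ^ 2 * (1 + ‖(x : EuclideanSpace ℝ (Fin d))‖))
                * Real.exp (-α * ‖(x : EuclideanSpace ℝ (Fin d))‖) :=
              mul_le_mul_of_nonneg_right h1 h3.le
          _ ≤ (a ^ 2 * ((n : ℝ) + 2)) * Real.exp (-α * ‖(x : EuclideanSpace ℝ (Fin d))‖) := by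
              refine mul_le_mul_of_nonneg_right ?_ h3.le
              exact mul_le_mul_of_nonneg_left (by linarith) (by positivity)
          _ ≤ a ^ 2 * ((n : ℝ) + 2) * Real.exp (-α * n) :=
              mul_le_mul_of_nonneg_left h2 (by positivity)
      have hsum1 : ∑ x ∈ u.filter (fun x => φ x = n), f x
          ≤ ((u.filter (fun x => φ x = n)).card : ℝ) * b := by
        calc ∑ x ∈ u.filter (fun x => φ x = n), f x
            ≤ (u.filter (fun x => φ x = n)).card • b :=
              Finset.sum_le_card_nsmul _ _ b hfle
          _ = ((u.filter (fun x => φ x = n)).card : ℝ) * b := by rw [nsmul_eq_mul]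
      have hcard : ((u.filter (fun x => φ x = n)).card : ℝ)
          ≤ ((hLF 0 ((n : ℝ) + 1)).toFinset.card : ℝ) := by
        have hcard' : (u.filter (fun x => φ x = n)).card
            ≤ (hLF 0 ((n : ℝ) + 1)).toFinset.card := by
          apply Finset.card_le_card_of_injOn (Subtype.val : γ → EuclideanSpace ℝ (Fin d))
          · intro x hx
            rw [Finset.mem_coe, Finset.mem_filter] at hx
            rw [Finset.mem_coe, Set.Finite.mem_toFinset]
            refine ⟨x.2, ?_⟩
            rw [dist_comm, dist_zero_right, ← hx.2]
            exact Nat.lt_floor_add_one _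
          · intro x _ y _ hxy
            exact Subtype.ext hxy
        exact_mod_cast hcard'
      have hN := count_real ((n : ℝ) + 1) (by positivity)
      calc ∑ x ∈ u.filter (fun x => φ x = n), f x
          ≤ ((u.filter (fun x => φ x = n)).card : ℝ) * b := hsum1
        _ ≤ (a * Real.sqrt (1 + (((n : ℝ) + 1) + r)) * ((((n : ℝ) + 1) + r) ^ d * c1) / v)
              * b := mul_le_mul_of_nonneg_right (hcard.trans hN) hbnonneg
        _ = g n := by rw [hg, hb]
    calc ∑ n ∈ u.image φ, ∑ x ∈ u.filter (fun x => φ x = n), f x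
        ≤ ∑ n ∈ u.image φ, g n := Finset.sum_le_sum hinner
      _ ≤ ∑' n, g n := Summable.sum_le_tsum _ (fun n _ => hgnonneg n) hgsummable
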